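/- Let G = (V,E) be a directed graph, let A, B, C ⊆ V be pairwise disjoint, and let γ ∈ an(A ∪ B ∪ C) \ (A ∪ B ∪ C). Suppose that in the undirected graph (G^B_{An(A∪B∪C)})^m both A ⊥_g B | C and A ⊥_g {γ} | (B ∪ C) hold. Then for every k ∈ C, either A ir_δ {k} | ((C \ {k}) ∪ B ∪ {γ}) or {γ} ir_δ {k} | ((C \ {k}) ∪ B ∪ A) holds in G. -/

import Mathlib

open Set

variable {V : Type*}

/-- There is a directed path (a sequence of ≥ 2 distinct vertices joined by
directed edges) from `v` to `w`; i.e. `v` is an ancestor of `w`. -/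
def DirPathConn (E : V → V → Prop) (v w : V) : Prop :=
  ∃ l : List V, l.Chain' E ∧ l.Nodup ∧ 2 ≤ l.length ∧
    l.head? = some v ∧ l.getLast? = some w

/-- `an(A)`: vertices outside `A` that are ancestors of some element of `A`. -/
def anSet (E : V → V → Prop) (A : Set V) : Set V :=
  {v | v ∉ A ∧ ∃ a ∈ A, DirPathConn E v a}

/-- `An(A) = A ∪ an(A)`, the smallest ancestral set containing `A`. -/
def AnSet (E : V → V → Prop) (A : Set V) : Set V := A ∪ anSet E A

/-- `pa(A)`: parents of `A` outside of `A`. -/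
def paSet (E : V → V → Prop) (A : Set V) : Set V :=
  {v | v ∉ A ∧ ∃ a ∈ A, E v a}

/-- `cl(A) = A ∪ pa(A)`, the closure of `A`. -/
def clSet (E : V → V → Prop) (A : Set V) : Set V := A ∪ paSet E A

/-- The induced subgraph `G_A` (as an edge relation on `V` supported on `A`). -/
def inducedGraph (E : V → V → Prop) (A : Set V) : V → V → Prop :=
  fun j k => E j k ∧ j ∈ A ∧ k ∈ A

/-- `G^B`: delete from `G` every directed edge starting in `B`. -/
def delOut (E : V → V → Prop) (B : Set V) : V → V → Prop :=
  fun j k => E j k ∧ j ∉ B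

/-- The moral graph `G^m`: distinct `j, k` are adjacent iff they are joined by
an edge in some direction or have a common child. -/
def moralGraph (E : V → V → Prop) : V → V → Prop :=
  fun j k => j ≠ k ∧ (E j k ∨ E k j ∨ ∃ c, E j c ∧ E k c)

/-- `l` is an undirected path from `v` to `w` in the undirected graph `H`:
a sequence of ≥ 2 distinct vertices, consecutive ones adjacent. -/
def IsUPath (H : V → V → Prop) (l : List V) (v w : V) : Prop :=
  l.Chain' H ∧ l.Nodup ∧ 2 ≤ l.length ∧
    l.head? = some v ∧ l.getLast? = some w

/-- `A ⊥_g B | C` in the undirected graph `H`: every path from a vertex of `A`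
to a vertex of `B` contains a vertex of `C`. -/
def uSep (H : V → V → Prop) (A B C : Set V) : Prop :=
  ∀ v ∈ A, ∀ w ∈ B, ∀ l : List V, IsUPath H l v w → ∃ c ∈ C, c ∈ l

/-- δ-separation for pairwise disjoint `A, B, C`: `A ⊥_g B | C` in the moral
graph of the subgraph of `G^B` induced by `An(A ∪ B ∪ C)`. -/
def deltaSepDisjoint (E : V → V → Prop) (A B C : Set V) : Prop :=
  uSep (moralGraph (inducedGraph (delOut E B) (AnSet E (A ∪ B ∪ C)))) A B C

/-- δ-separation `A ir_δ B | C` for general (not necessarily disjoint) sets: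
`C \ B` δ-separates `A \ (B ∪ C)` from `B`. -/
def deltaSep (E : V → V → Prop) (A B C : Set V) : Prop :=
  deltaSepDisjoint E (A \ (B ∪ C)) B (C \ B)

lemma walk_to_path {R : V → V → Prop} :
    ∀ (n : ℕ) (l : List V), l.length ≤ n → l.Chain' R → ∀ v w, l.head? = some v →
      l.getLast? = some w →
      ∃ l' : List V, l'.Chain' R ∧ l'.Nodup ∧ l'.head? = some v ∧
        l'.getLast? = some w ∧ ∀ x ∈ l', x ∈ l := by
  intro n
  induction n with
  | zero =>
    intro l hl _ v w hv _
    cases l with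
    | nil => simp at hv
    | cons a t => simp at hl
  | succ n ih =>
    intro l hl hc v w hv hw
    cases l with
    | nil => simp at hv
    | cons x t =>
      rw [List.head?_cons, Option.some_inj] at hv
      subst hv
      by_cases hvt : x ∈ t
      · obtain ⟨t₁, t₂, rfl⟩ := List.append_of_mem hvt
        have hsuff : (x :: t₂).Chain' R := hc.suffix ⟨x :: t₁, by simp⟩
        have hlen : (x :: t₂).length ≤ n := by
          simp only [List.length_cons, List.length_append] at hl ⊢; omega
        have hlast : (x :: t₂).getLast? = some w := by
          rw [← hw]
          rw [show x :: (t₁ ++ x :: t₂) = (x :: t₁) ++ x :: t₂ by simp]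
          rw [List.getLast?_append_of_ne_nil _ (by simp)]
        obtain ⟨l', h1, h2, h3, h4, h5⟩ := ih (x :: t₂) hlen hsuff x w rfl hlast
        refine ⟨l', h1, h2, h3, h4, fun z hz => ?_⟩
        have := h5 z hz
        simp only [List.mem_cons, List.mem_append] at this ⊢
        tauto
      · cases t with
        | nil =>
          exact ⟨[x], List.isChain_singleton _, by simp, rfl, by simpa using hw, by simp⟩
        | cons y t' =>
          have hct : (y :: t').Chain' R := hc.tail
          have hlen : (y :: t').length ≤ n := by simpa using hl
          have hlast : (y :: t').getLast? = some w := by rw [← hw]; rfl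
          obtain ⟨l', h1, h2, h3, h4, h5⟩ := ih (y :: t') hlen hct y w rfl hlast
          have hvl' : x ∉ l' := fun hv' => hvt (h5 x hv')
          have hl'ne : l' ≠ [] := by intro h; rw [h] at h3; simp at h3
          obtain ⟨a, l'', rfl⟩ := List.exists_cons_of_ne_nil hl'ne
          rw [List.head?_cons, Option.some_inj] at h3
          subst h3
          refine ⟨x :: a :: l'', ?_, ?_, rfl, ?_, ?_⟩
          · refine List.isChain_cons_cons.mpr ?_
            exact ⟨(List.isChain_cons_cons.mp hc).1, h1⟩
          · exact List.nodup_cons.mpr ⟨hvl', h2⟩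
          · rw [List.getLast?_cons_cons]; exact h4
          · intro z hz
            rcases List.mem_cons.mp hz with rfl | hz
            · simp
            · exact List.mem_cons_of_mem _ (h5 z hz)

/-- Eliminate the length bound. -/
lemma walk_to_path' {R : V → V → Prop} (l : List V) (hc : l.Chain' R) (v w : V)
    (hv : l.head? = some v) (hw : l.getLast? = some w) :
    ∃ l' : List V, l'.Chain' R ∧ l'.Nodup ∧ l'.head? = some v ∧
      l'.getLast? = some w ∧ ∀ x ∈ l', x ∈ l :=
  walk_to_path l.length l le_rfl hc v w hv hw

lemma chain'_imp_mem {R R' : V → V → Prop} :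
    ∀ l : List V, (∀ x ∈ l, ∀ y ∈ l, R x y → R' x y) → l.Chain' R → l.Chain' R'
  | [] , _, _ => List.isChain_nil
  | [_], _, _ => List.isChain_singleton _
  | x :: y :: t, h, hc => by
    unfold List.Chain' at hc ⊢; rw [List.isChain_cons_cons] at hc ⊢
    refine ⟨h x (by simp) y (by simp) hc.1, chain'_imp_mem (y :: t) ?_ hc.2⟩
    intro a ha b hb
    exact h a (List.mem_cons_of_mem _ ha) b (List.mem_cons_of_mem _ hb)

lemma dirPathConn_trans {E : V → V → Prop} {v g b : V} (h1 : DirPathConn E v g)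
    (h2 : DirPathConn E g b) (hvb : v ≠ b) : DirPathConn E v b := by
  obtain ⟨l1, hc1, -, hlen1, hh1, hl1⟩ := h1
  obtain ⟨l2, hc2, -, hlen2, hh2, hl2⟩ := h2
  obtain ⟨x, t, rfl⟩ : ∃ x t, l2 = x :: t := by
    cases l2 with
    | nil => simp at hh2
    | cons x t => exact ⟨x, t, rfl⟩
  rw [List.head?_cons, Option.some_inj] at hh2
  subst hh2
  have htne : t ≠ [] := by
    intro h; subst h; simp at hlen2
  have hl1ne : l1 ≠ [] := by intro h; subst h; simp at hh1
  -- walk l1 ++ t from v to b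
  have hcw : (l1 ++ t).Chain' E := by
    refine List.IsChain.append hc1 hc2.tail ?_
    intro p hp q hq
    rw [hl1, Option.mem_def, Option.some_inj] at hp
    subst hp
    have := List.isChain_cons.mp hc2
    exact this.1 q hq
  have hhw : (l1 ++ t).head? = some v := by
    rw [List.head?_append_of_ne_nil _ hl1ne]; exact hh1
  have hlw : (l1 ++ t).getLast? = some b := by
    rw [List.getLast?_append_of_ne_nil _ htne, ← hl2]
    obtain ⟨a, s, rfl⟩ := List.exists_cons_of_ne_nil htne
    exact (List.getLast?_cons_cons (l := s)).symm
  obtain ⟨l', h1, h2, h3, h4, -⟩ := walk_to_path' (l1 ++ t) hcw v b hhw hlw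
  refine ⟨l', h1, h2, ?_, h3, h4⟩
  match l', h3, h4 with
  | [], h3, _ => simp at h3
  | [x], h3, h4 => simp_all
  | x :: y :: t, _, _ => simp

lemma anSet_union_gamma {E : V → V → Prop} {S : Set V} {γ : V}
    (hγ : γ ∈ anSet E S) : AnSet E (S ∪ {γ}) = AnSet E S := by
  ext x
  constructor
  · rintro (hx | hx)
    · rcases hx with hx | hx
      · exact Or.inl hx
      · rw [Set.mem_singleton_iff] at hx; subst hx; exact Or.inr hγ
    · obtain ⟨hx1, a, ha, hpath⟩ := hx
      have hxS : x ∉ S := fun h => hx1 (Or.inl h)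
      rcases ha with ha | ha
      · exact Or.inr ⟨hxS, a, ha, hpath⟩
      · rw [Set.mem_singleton_iff] at ha; subst ha
        obtain ⟨hγS, b, hb, hγb⟩ := hγ
        exact Or.inr ⟨hxS, b, hb, dirPathConn_trans hpath hγb (fun h => hxS (h ▸ hb))⟩
  · rintro (hx | hx)
    · exact Or.inl (Or.inl hx)
    · obtain ⟨hx1, a, ha, hpath⟩ := hx
      by_cases hxγ : x = γ
      · exact Or.inl (Or.inr hxγ)
      · exact Or.inr ⟨fun h => h.elim hx1 hxγ, a, Or.inl ha, hpath⟩

lemma moral_k_edge {E : V → V → Prop} {An : Set V} {k u : V}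
    (h : moralGraph (inducedGraph (delOut E ({k} : Set V)) An) u k) :
    E u k ∧ u ≠ k ∧ u ∈ An ∧ k ∈ An := by
  obtain ⟨hne, hor⟩ := h
  rcases hor with ⟨⟨hE, hu⟩, hAn1, hAn2⟩ | ⟨⟨hE, hk⟩, hAn1, hAn2⟩ | ⟨c, ⟨_, _⟩, ⟨⟨_, hk⟩, _, _⟩⟩
  · exact ⟨hE, hne, hAn1, hAn2⟩
  · exact absurd rfl hk
  · exact absurd rfl hk

lemma moral_symm {E' : V → V → Prop} {u v : V} (h : moralGraph E' u v) :
    moralGraph E' v u := by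
  obtain ⟨hne, hor⟩ := h
  refine ⟨hne.symm, ?_⟩
  rcases hor with h | h | ⟨c, h1, h2⟩
  · exact Or.inr (Or.inl h)
  · exact Or.inl h
  · exact Or.inr (Or.inr ⟨c, h2, h1⟩)

lemma moral_transfer {E : V → V → Prop} {B K An : Set V} {u v : V}
    (h : moralGraph (inducedGraph (delOut E K) An) u v) (hu : u ∉ B) (hv : v ∉ B) :
    moralGraph (inducedGraph (delOut E B) An) u v := by
  obtain ⟨hne, hor⟩ := h
  refine ⟨hne, ?_⟩
  rcases hor with ⟨⟨hE, _⟩, h1, h2⟩ | ⟨⟨hE, _⟩, h1, h2⟩ | ⟨c, ⟨⟨e1, _⟩, m1, m2⟩, ⟨⟨e2, _⟩, m3, m4⟩⟩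
  · exact Or.inl ⟨⟨hE, hu⟩, h1, h2⟩
  · exact Or.inr (Or.inl ⟨⟨hE, hv⟩, h1, h2⟩)
  · exact Or.inr (Or.inr ⟨c, ⟨⟨e1, hu⟩, m1, m2⟩, ⟨⟨e2, hv⟩, m3, m4⟩⟩)

/-- If `γ ∈ an(A ∪ B ∪ C) \ (A ∪ B ∪ C)` and, in `(G^B_{An(A ∪ B ∪ C)})^m`,
both `A ⊥_g B | C` and `A ⊥_g {γ} | (B ∪ C)` hold, then every `k ∈ C`
satisfies `A ir_δ {k} | ((C \ {k}) ∪ B ∪ {γ})` or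
`{γ} ir_δ {k} | ((C \ {k}) ∪ B ∪ A)`. -/
theorem deltaSep_separator_dichotomy [Fintype V] (E : V → V → Prop)
    (hE : ∀ j k, E j k → j ≠ k) (A B C : Set V)
    (hAB : Disjoint A B) (hAC : Disjoint A C) (hBC : Disjoint B C)
    (γ : V) (hγ : γ ∈ anSet E (A ∪ B ∪ C) \ (A ∪ B ∪ C))
    (h1 : uSep (moralGraph (inducedGraph (delOut E B) (AnSet E (A ∪ B ∪ C))))
      A B C)
    (h2 : uSep (moralGraph (inducedGraph (delOut E B) (AnSet E (A ∪ B ∪ C))))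
      A {γ} (B ∪ C)) :
    ∀ k ∈ C,
      deltaSep E A {k} ((C \ {k}) ∪ B ∪ {γ}) ∨
      deltaSep E {γ} {k} ((C \ {k}) ∪ B ∪ A) := by
  obtain ⟨hγan, hγS⟩ := hγ
  have hγA : γ ∉ A := fun h => hγS (Or.inl (Or.inl h))
  have hγB : γ ∉ B := fun h => hγS (Or.inl (Or.inr h))
  have hγC : γ ∉ C := fun h => hγS (Or.inr h)
  have hAB' : ∀ x, x ∈ A → x ∉ B := fun x => fun h h' => hAB.le_bot ⟨h, h'⟩
  have hAC' : ∀ x, x ∈ A → x ∉ C := fun x => fun h h' => hAC.le_bot ⟨h, h'⟩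
  have hBC' : ∀ x, x ∈ B → x ∉ C := fun x => fun h h' => hBC.le_bot ⟨h, h'⟩
  intro k hk
  by_cases hfirst : deltaSep E A {k} ((C \ {k}) ∪ B ∪ {γ})
  · exact Or.inl hfirst
  right
  -- the two relevant vertex sets both equal (A ∪ B ∪ C) ∪ {γ}
  have hset1 : (A \ ({k} ∪ ((C \ {k}) ∪ B ∪ {γ}))) ∪ {k} ∪
      (((C \ {k}) ∪ B ∪ {γ}) \ {k}) = (A ∪ B ∪ C) ∪ {γ} := by
    ext x
    have h1 := hAB' x; have h2 := hAC' x; have h3 := hBC' x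
    simp only [Set.mem_union, Set.mem_diff, Set.mem_singleton_iff]
    constructor
    · rintro ((⟨hA, -⟩ | rfl) | ⟨(⟨⟨hC, -⟩ | hB⟩ | rfl), -⟩)
      · exact Or.inl (Or.inl (Or.inl hA))
      · exact Or.inl (Or.inr hk)
      · exact Or.inl (Or.inr hC)
      · exact Or.inl (Or.inl (Or.inr hB))
      · exact Or.inr rfl
    · rintro (((hA | hB) | hC) | rfl)
      · refine Or.inl (Or.inl ⟨hA, ?_⟩)
        rintro (rfl | ((⟨hC', -⟩ | hB') | rfl))
        · exact h2 hA hk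
        · exact h2 hA hC'
        · exact h1 hA hB'
        · exact hγA hA
      · by_cases hxk : x = k
        · exact Or.inl (Or.inr hxk)
        · exact Or.inr ⟨Or.inl (Or.inr hB), hxk⟩
      · by_cases hxk : x = k
        · exact Or.inl (Or.inr hxk)
        · exact Or.inr ⟨Or.inl (Or.inl ⟨hC, hxk⟩), hxk⟩
      · exact Or.inr ⟨Or.inr rfl, fun h => hγC (h ▸ hk)⟩
  have hset2 : ({γ} \ ({k} ∪ ((C \ {k}) ∪ B ∪ A))) ∪ {k} ∪
      (((C \ {k}) ∪ B ∪ A) \ {k}) = (A ∪ B ∪ C) ∪ {γ} := by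
    ext x
    simp only [Set.mem_union, Set.mem_diff, Set.mem_singleton_iff]
    constructor
    · rintro ((⟨rfl, -⟩ | rfl) | ⟨(⟨⟨hC, -⟩ | hB⟩ | hA), -⟩)
      · exact Or.inr rfl
      · exact Or.inl (Or.inr hk)
      · exact Or.inl (Or.inr hC)
      · exact Or.inl (Or.inl (Or.inr hB))
      · exact Or.inl (Or.inl (Or.inl hA))
    · rintro (((hA | hB) | hC) | rfl)
      · exact Or.inr ⟨Or.inr hA, fun h => hAC' x hA (h ▸ hk)⟩
      · exact Or.inr ⟨Or.inl (Or.inr hB), fun h => hBC' x hB (h ▸ hk)⟩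
      · by_cases hxk : x = k
        · exact Or.inl (Or.inr hxk)
        · exact Or.inr ⟨Or.inl (Or.inl ⟨hC, hxk⟩), hxk⟩
      · refine Or.inl (Or.inl ⟨rfl, ?_⟩)
        rintro (rfl | ((⟨hC', -⟩ | hB') | hA'))
        · exact hγC hk
        · exact hγC hC'
        · exact hγB hB'
        · exact hγA hA'
  have hAnγ : AnSet E ((A ∪ B ∪ C) ∪ {γ}) = AnSet E (A ∪ B ∪ C) :=
    anSet_union_gamma hγan

  -- extract the path `p` from the failure of the first separation
  unfold deltaSep deltaSepDisjoint at hfirst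
  rw [hset1, hAnγ] at hfirst
  unfold uSep at hfirst
  push_neg at hfirst
  obtain ⟨a, ha, w0, hw0, p, hp, hpav⟩ := hfirst
  rw [Set.mem_singleton_iff] at hw0
  rw [hw0] at hp
  clear hw0
  have haA : a ∈ A := ha.1
  -- prove the second separation
  unfold deltaSep deltaSepDisjoint uSep
  rw [hset2, hAnγ]
  intro v hv w hw q hq
  by_contra hno
  push_neg at hno
  have hv' : v = γ := hv.1
  rw [Set.mem_singleton_iff] at hw
  rw [hv', hw] at hq
  clear hv hv' hw
  -- avoidance facts for p
  have hpB : ∀ x ∈ p, x ∉ B := fun x hx hB =>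
    hpav x ⟨Or.inl (Or.inr hB), fun he => hBC' x hB (he ▸ hk)⟩ hx
  have hpC : ∀ x ∈ p, x ∈ C → x = k := fun x hx hC => by
    by_contra hne
    exact hpav x ⟨Or.inl (Or.inl ⟨hC, hne⟩), hne⟩ hx
  have hpγ : γ ∉ p := fun hx =>
    hpav γ ⟨Or.inr rfl, fun he => hγC (he ▸ hk)⟩ hx
  -- avoidance facts for q
  have hqB : ∀ x ∈ q, x ∉ B := fun x hx hB =>
    hno x ⟨Or.inl (Or.inr hB), fun he => hBC' x hB (he ▸ hk)⟩ hx
  have hqC : ∀ x ∈ q, x ∈ C → x = k := fun x hx hC => by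
    by_contra hne
    exact hno x ⟨Or.inl (Or.inl ⟨hC, hne⟩), hne⟩ hx
  have hqA : ∀ x ∈ q, x ∉ A := fun x hx hA =>
    hno x ⟨Or.inr hA, fun he => hAC' x hA (he ▸ hk)⟩ hx
  obtain ⟨hpc, hpnd, hplen, hph, hpl⟩ := hp
  obtain ⟨hqc, hqnd, hqlen, hqh, hql⟩ := hq
  -- decompose p = p₀ ++ [k]
  obtain ⟨p₀, rfl⟩ : ∃ p₀, p = p₀ ++ [k] :=
    ⟨p.dropLast, (List.dropLast_append_getLast? k hpl).symm⟩
  obtain ⟨q₀, rfl⟩ : ∃ q₀, q = q₀ ++ [k] :=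
    ⟨q.dropLast, (List.dropLast_append_getLast? k hql).symm⟩
  have hp₀ne : p₀ ≠ [] := by
    intro h; subst h; simp at hplen
  have hq₀ne : q₀ ≠ [] := by
    intro h; subst h; simp at hqlen
  obtain ⟨hcp₀, -, hjunp⟩ := List.isChain_append.mp hpc
  obtain ⟨hcq₀, -, hjunq⟩ := List.isChain_append.mp hqc
  set u := p₀.getLast hp₀ne with hu
  set w' := q₀.getLast hq₀ne with hw'
  have hu_mem : u ∈ p₀ := List.getLast_mem hp₀ne
  have hw'_mem : w' ∈ q₀ := List.getLast_mem hq₀ne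
  have hp₀last : p₀.getLast? = some u := List.getLast?_eq_getLast hp₀ne
  have hq₀last : q₀.getLast? = some w' := List.getLast?_eq_getLast hq₀ne
  have hedgeu := hjunp u hp₀last k rfl
  have hedgew := hjunq w' hq₀last k rfl
  obtain ⟨hEuk, hukne, huAn, hkAn⟩ := moral_k_edge hedgeu
  obtain ⟨hEwk, hwkne, hwAn, -⟩ := moral_k_edge hedgew
  have hph₀ : p₀.head? = some a := by
    rwa [List.head?_append_of_ne_nil _ hp₀ne] at hph
  have hqh₀ : q₀.head? = some γ := by
    rwa [List.head?_append_of_ne_nil _ hq₀ne] at hqh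
  have hknp₀ : k ∉ p₀ := fun h => (List.nodup_append.mp hpnd).2.2 k h k (by simp) rfl
  have hknq₀ : k ∉ q₀ := fun h => (List.nodup_append.mp hqnd).2.2 k h k (by simp) rfl
  have huB : u ∉ B := hpB u (List.mem_append_left _ hu_mem)
  have hwB : w' ∉ B := hqB w' (List.mem_append_left _ hw'_mem)
  -- transfer the chains to the graph of `h2`
  have hp₀H : p₀.Chain' (moralGraph (inducedGraph (delOut E B) (AnSet E (A ∪ B ∪ C)))) :=
    chain'_imp_mem p₀ (fun x hx y hy hxy => moral_transfer hxy
      (hpB x (List.mem_append_left _ hx)) (hpB y (List.mem_append_left _ hy))) hcp₀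
  have hq₀H : q₀.Chain' (moralGraph (inducedGraph (delOut E B) (AnSet E (A ∪ B ∪ C)))) :=
    chain'_imp_mem q₀ (fun x hx y hy hxy => moral_transfer hxy
      (hqB x (List.mem_append_left _ hx)) (hqB y (List.mem_append_left _ hy))) hcq₀
  have hrH : q₀.reverse.Chain' (moralGraph (inducedGraph (delOut E B) (AnSet E (A ∪ B ∪ C)))) :=
    List.isChain_reverse.mpr (hq₀H.imp fun a b hab => moral_symm hab)
  have hrhead : q₀.reverse.head? = some w' := by
    rw [List.head?_reverse]; exact hq₀last
  have hrlast : q₀.reverse.getLast? = some γ := by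
    rw [List.getLast?_reverse]; exact hqh₀
  -- the common final contradiction
  have final : ∀ W : List V,
      W.Chain' (moralGraph (inducedGraph (delOut E B) (AnSet E (A ∪ B ∪ C)))) →
      W.head? = some a → W.getLast? = some γ →
      (∀ x ∈ W, x ∈ p₀ ∨ x ∈ q₀) → False := by
    intro W hWc hWh hWl hWmem
    obtain ⟨l', hc', hnd', hh', hl', hsub⟩ := walk_to_path' W hWc a γ hWh hWl
    have hlen' : 2 ≤ l'.length := by
      match l', hh', hl' with
      | [], hh', _ => simp at hh'
      | [x], hh', hl' =>
        exfalso
        rw [List.head?_cons, Option.some_inj] at hh'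
        simp only [List.getLast?_singleton, Option.some_inj] at hl'
        exact hγA ((hh'.symm.trans hl') ▸ haA)
      | x :: y :: t, _, _ => simp
    obtain ⟨c, hcBC, hcl⟩ := h2 a haA γ rfl l' ⟨hc', hnd', hlen', hh', hl'⟩
    have hcW := hWmem c (hsub c hcl)
    rcases hcBC with hcB | hcC
    · rcases hcW with hc | hc
      · exact hpB c (List.mem_append_left _ hc) hcB
      · exact hqB c (List.mem_append_left _ hc) hcB
    · rcases hcW with hc | hc
      · exact hknp₀ ((hpC c (List.mem_append_left _ hc) hcC) ▸ hc)
      · exact hknq₀ ((hqC c (List.mem_append_left _ hc) hcC) ▸ hc)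
  by_cases huw : u = w'
  · -- the two paths meet at a common parent of k
    have hrne : q₀.reverse ≠ [] := by
      simpa using hq₀ne
    obtain ⟨w'', rt, hr⟩ := List.exists_cons_of_ne_nil hrne
    have hw'' : w'' = w' := by
      rw [hr, List.head?_cons, Option.some_inj] at hrhead; exact hrhead
    subst hw''
    have hrtne : rt ≠ [] := by
      intro h
      subst h
      rw [hr] at hrlast
      simp only [List.getLast?_singleton, Option.some_inj] at hrlast
      exact hpγ (List.mem_append_left _ (hrlast ▸ huw ▸ hu_mem))
    refine final (p₀ ++ rt) ?_ ?_ ?_ ?_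
    · refine List.IsChain.append hp₀H ?_ ?_
      · have := hrH; rw [hr] at this; exact this.tail
      · intro x hx y hy
        rw [Option.mem_def, hp₀last, Option.some_inj] at hx
        subst hx
        have hrc := hrH
        rw [hr] at hrc; have hrc := List.isChain_cons.mp hrc
        exact huw ▸ hrc.1 y hy
    · rw [List.head?_append_of_ne_nil _ hp₀ne]; exact hph₀
    · rw [List.getLast?_append_of_ne_nil _ hrtne]
      obtain ⟨b, s, rfl⟩ := List.exists_cons_of_ne_nil hrtne
      rw [hr, List.getLast?_cons_cons] at hrlast
      exact hrlast
    · intro x hx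
      rcases List.mem_append.mp hx with hx | hx
      · exact Or.inl hx
      · exact Or.inr (List.mem_reverse.mp (hr ▸ List.mem_cons_of_mem _ hx))
  · -- u ≠ w' : join them through their common child k
    refine final (p₀ ++ q₀.reverse) ?_ ?_ ?_ ?_
    · refine List.IsChain.append hp₀H hrH ?_
      intro x hx y hy
      rw [Option.mem_def, hp₀last, Option.some_inj] at hx
      rw [Option.mem_def, hrhead, Option.some_inj] at hy
      subst hx; subst hy
      exact ⟨huw, Or.inr (Or.inr ⟨k, ⟨⟨hEuk, huB⟩, huAn, hkAn⟩, ⟨⟨hEwk, hwB⟩, hwAn, hkAn⟩⟩)⟩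
    · rw [List.head?_append_of_ne_nil _ hp₀ne]; exact hph₀
    · rw [List.getLast?_append_of_ne_nil _ (by simpa using hq₀ne)]; exact hrlast
    · intro x hx
      rcases List.mem_append.mp hx with hx | hx
      · exact Or.inl hx
      · exact Or.inr (List.mem_reverse.mp hx)
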